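/- Suppose 2·n_j ≤ n for every j = 1,…,p. Then there exists a real skew-symmetric matrix x ∈ m̃ = m ∩ so(n) such that for every λ ∈ ℂ the centralizer of x + λa in M_n(ℂ) has complex dimension exactly n, i.e. dim_ℂ {Z ∈ M_n(ℂ) : (x+λa)Z = Z(x+λa)} = n. -/

import Mathlib

open Module Matrix

/-- The centralizer of a matrix `A` as a `ℂ`-subspace of the matrix algebra. -/
noncomputable def matCentC (n : ℕ) (A : Matrix (Fin n) (Fin n) ℂ) :
    Submodule ℂ (Matrix (Fin n) (Fin n) ℂ) where
  carrier := {B | A * B = B * A}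
  add_mem' := by
    intro X Y hX hY
    simp only [Set.mem_setOf_eq] at *
    rw [Matrix.mul_add, Matrix.add_mul, hX, hY]
  zero_mem' := by simp
  smul_mem' := by
    intro c X hX
    simp only [Set.mem_setOf_eq] at *
    rw [Matrix.mul_smul, Matrix.smul_mul, hX]

open List in

lemma arrange {α β : Type*} [DecidableEq α] [DecidableEq β] (f : α → β) :
    ∀ N : ℕ, ∀ s : Multiset α, s.card = N → ∀ b : β,
    (∀ c : β, c ≠ b → 2 * (s.filter (fun x => f x = c)).card ≤ s.card + 1) →
    2 * (s.filter (fun x => f x = b)).card ≤ s.card →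
    ∃ l : List α, (l : Multiset α) = s ∧ l.Chain' (fun x y => f x ≠ f y) ∧
      ∀ x ∈ l.head?, f x ≠ b := by
  intro N
  induction N with
  | zero =>
    intro s hs b _ _
    have : s = 0 := Multiset.card_eq_zero.mp hs
    exact ⟨[], by simp [this], List.isChain_nil, by simp⟩
  | succ N ih =>
    intro s hs b hyp1 hyp2
    have hex : ∃ a ∈ s.toFinset, f a ≠ b := by
      by_contra h
      push_neg at h
      have : s.filter (fun x => f x = b) = s := by
        rw [Multiset.filter_eq_self]
        intro x hx
        exact h x (Multiset.mem_toFinset.mpr hx)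
      rw [this, hs] at hyp2
      omega
    set F := s.toFinset.filter (fun x => f x ≠ b) with hF
    have hFne : F.Nonempty := by
      obtain ⟨a, ha, hab⟩ := hex
      exact ⟨a, Finset.mem_filter.mpr ⟨ha, hab⟩⟩
    obtain ⟨a, haF, hamax⟩ := Finset.exists_max_image F
      (fun x => (s.filter (fun y => f y = f x)).card) hFne
    obtain ⟨haS, hab⟩ := Finset.mem_filter.mp haF
    have haS' : a ∈ s := Multiset.mem_toFinset.mp haS
    set s' := s.erase a with hs'
    have hconsS : a ::ₘ s' = s := Multiset.cons_erase haS'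
    have hcard' : s'.card = N := by
      rw [hs', Multiset.card_erase_of_mem haS', hs]; rfl
    have hfilter_ne : ∀ c : β, c ≠ f a →
        (s'.filter (fun x => f x = c)).card = (s.filter (fun x => f x = c)).card := by
      intro c hc
      conv_rhs => rw [← hconsS]
      rw [Multiset.filter_cons_of_neg _ (by simpa using hc.symm)]
    have hfilter_a :
        (s'.filter (fun x => f x = f a)).card + 1 = (s.filter (fun x => f x = f a)).card := by
      conv_rhs => rw [← hconsS]
      rw [Multiset.filter_cons_of_pos _ (by simp)]
      simp
    -- strictly dominated pairs: for c ≠ b, c ≠ f a, 2 * count c ≤ s.card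
    have hdom : ∀ c : β, c ≠ b → c ≠ f a →
        2 * (s.filter (fun x => f x = c)).card ≤ s.card := by
      intro c hcb hca
      rcases Nat.eq_zero_or_pos (s.filter (fun x => f x = c)).card with h | h
      · omega
      · obtain ⟨x, hx⟩ := Multiset.card_pos_iff_exists_mem.mp h
        have hxs := Multiset.mem_filter.mp hx
        have hxF : x ∈ F := Finset.mem_filter.mpr
          ⟨Multiset.mem_toFinset.mpr hxs.1, by rw [hxs.2]; exact hcb⟩
        have hle := hamax x hxF
        rw [hxs.2] at hle
        -- filters for c and f a are disjoint
        have hdisj : (s.filter (fun x => f x = c)).card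
            + (s.filter (fun x => f x = f a)).card ≤ s.card := by
          have h1 : s.filter (fun x => f x = f a) ≤ s.filter (fun x => ¬ f x = c) :=
            Multiset.monotone_filter_right s (fun x hx => by rw [hx]; exact fun h => hca h.symm)
          have h2 := Multiset.filter_add_not (fun x => f x = c) s
          have := Multiset.card_le_card h1
          have h3 := congrArg Multiset.card h2
          rw [Multiset.card_add] at h3
          omega
        omega
    -- apply IH to s' with forbidden value f a
    obtain ⟨l', hl'perm, hl'chain, hl'head⟩ := ih s' hcard' (f a)
      (by
        intro c hc
        rw [hfilter_ne c hc, hcard']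
        rcases eq_or_ne c b with rfl | hcb
        · rw [hs] at hyp2; omega
        · have := hdom c hcb hc; rw [hs] at this; omega)
      (by
        have := hyp1 (f a) hab
        rw [hs] at this
        omega)
    refine ⟨a :: l', ?_, ?_, ?_⟩
    · show (a ::ₘ (l' : Multiset α)) = s
      rw [hl'perm, hconsS]
    · refine List.isChain_cons.mpr ?_
      exact ⟨fun y hy => (hl'head y hy).symm, hl'chain⟩
    · intro x hx
      simp only [List.head?_cons, Option.mem_def, Option.some.injEq] at hx
      rw [← hx]; exact hab

lemma exists_good_order (n p : ℕ) (blk : Fin n → Fin p) (hn : 0 < n)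
    (hhalf : ∀ j, 2 * (Finset.univ.filter (fun i => blk i = j)).card ≤ n) :
    ∃ e : Fin n ≃ Fin n, ∀ (k : ℕ) (h1 : k < n) (h2 : k + 1 < n),
      blk (e ⟨k, h1⟩) ≠ blk (e ⟨k + 1, h2⟩) := by
  have hcardU : (Finset.univ.val : Multiset (Fin n)).card = n := by
    rw [← Finset.card_def]; simp
  have hcnt : ∀ c : Fin p,
      2 * ((Finset.univ.val : Multiset (Fin n)).filter (fun i => blk i = c)).card ≤ n := by
    intro c
    have := hhalf c
    rwa [Finset.card_def, Finset.filter_val] at this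
  obtain ⟨l, hlperm, hlchain, -⟩ := arrange blk n (Finset.univ.val : Multiset (Fin n))
    hcardU (blk ⟨0, hn⟩)
    (fun c _ => le_trans (hcnt c) (by omega))
    (le_trans (hcnt _) (by rw [hcardU]))
  have hnd : l.Nodup := by
    have := Finset.univ.nodup (α := Fin n)
    rw [← hlperm] at this
    exact this
  have hmem : ∀ x : Fin n, x ∈ l := by
    intro x
    have : x ∈ (l : Multiset (Fin n)) := by rw [hlperm]; exact Finset.mem_univ_val x
    exact this
  have hlen : l.length = n := by
    have : (l : Multiset (Fin n)).card = n := by rw [hlperm, hcardU]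
    simpa using this
  set e0 := hnd.getEquivOfForallMemList l hmem with he0
  refine ⟨(finCongr hlen.symm).trans e0, ?_⟩
  intro k h1 h2
  have hc := List.isChain_iff_getElem.mp hlchain k (by omega)
  simpa [he0, List.Nodup.getEquivOfForallMemList] using hc

lemma mem_matCentC {n : ℕ} {A B : Matrix (Fin n) (Fin n) ℂ} :
    B ∈ matCentC n A ↔ A * B = B * A := Iff.rfl

lemma cent_rank (n : ℕ) (T : Matrix (Fin n) (Fin n) ℂ)
    (h0 : ∀ k l : Fin n, (l : ℕ) + 1 < (k : ℕ) → T k l = 0)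
    (h1 : ∀ k l : Fin n, (k : ℕ) = (l : ℕ) + 1 → T k l ≠ 0) :
    finrank ℂ (matCentC n T) = n := by
  rcases Nat.eq_zero_or_pos n with hn | hn
  · subst hn
    have hsub : Subsingleton (Matrix (Fin 0) (Fin 0) ℂ) :=
      ⟨fun a b => by ext i; exact i.elim0⟩
    have : matCentC 0 T = ⊥ := by
      apply Submodule.ext
      intro B
      simp only [Submodule.mem_bot]
      constructor
      · intro _; exact hsub.elim B 0
      · intro h; subst h; exact (matCentC 0 T).zero_mem
    rw [this]; simp
  · -- main case
    set i0 : Fin n := ⟨0, hn⟩ with hi0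
    set v0 : Fin n → ℂ := Pi.single i0 1 with hv0
    -- key triangularity claim
    have key : ∀ m : ℕ, ∀ hm : m < n,
        (∀ k : Fin n, m < (k : ℕ) → (T ^ m).mulVec v0 k = 0) ∧
        (T ^ m).mulVec v0 ⟨m, hm⟩ ≠ 0 := by
      intro m
      induction m with
      | zero =>
        intro hm
        constructor
        · intro k hk
          simp only [pow_zero, Matrix.one_mulVec]
          exact Pi.single_eq_of_ne (by exact fun h => by simp [hi0, Fin.ext_iff] at h; omega) 1
        · simp only [pow_zero, Matrix.one_mulVec]
          have : (⟨0, hm⟩ : Fin n) = i0 := rfl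
          rw [this, hv0, Pi.single_eq_same]; exact one_ne_zero
      | succ m ih =>
        intro hm
        have hm' : m < n := Nat.lt_of_succ_lt hm
        obtain ⟨ih0, ih1⟩ := ih hm'
        have hrw : (T ^ (m+1)).mulVec v0 = T.mulVec ((T ^ m).mulVec v0) := by
          rw [Matrix.mulVec_mulVec, ← pow_succ']
        constructor
        · intro k hk
          rw [hrw]
          show ∑ l, T k l * (T ^ m).mulVec v0 l = 0
          apply Finset.sum_eq_zero
          intro l _
          rcases lt_or_ge (m : ℕ) (l : ℕ) with h | h
          · rw [ih0 l h, mul_zero]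
          · rw [h0 k l (by omega), zero_mul]
        · rw [hrw]
          show ∑ l, T ⟨m+1, hm⟩ l * (T ^ m).mulVec v0 l ≠ 0
          have := Finset.sum_eq_single (M := ℂ) (a := (⟨m, hm'⟩ : Fin n))
            (f := fun l => T ⟨m+1, hm⟩ l * (T ^ m).mulVec v0 l)
            (by
              intro l _ hl
              show T ⟨m+1, hm⟩ l * (T ^ m).mulVec v0 l = 0
              rcases lt_or_ge (m : ℕ) (l : ℕ) with h | h
              · rw [ih0 l h, mul_zero]
              · have hlm : (l : ℕ) < m :=
                  lt_of_le_of_ne h (fun hh => hl (Fin.ext (by simpa using hh)))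
                rw [h0 ⟨m+1, hm⟩ l (by simpa using by omega), zero_mul])
            (by intro h; exact absurd (Finset.mem_univ _) h)
          rw [this]
          exact mul_ne_zero (h1 _ _ rfl) ih1
    -- the vectors w j
    set w : Fin n → (Fin n → ℂ) := fun j => (T ^ (j : ℕ)).mulVec v0 with hw
    set W : Matrix (Fin n) (Fin n) ℂ := fun k j => w j k with hW
    have hWtri : W.BlockTriangular id := by
      intro i j hij
      exact (key j j.isLt).1 i hij
    have hWdet : W.det ≠ 0 := by
      rw [Matrix.det_of_upperTriangular hWtri]
      apply Finset.prod_ne_zero_iff.mpr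
      intro k _
      have := (key k k.isLt).2
      simpa [hW, hw, Fin.eta] using this
    have hWunit : IsUnit W.det := isUnit_iff_ne_zero.mpr hWdet
    have hWW : W * W⁻¹ = 1 := Matrix.mul_nonsing_inv W hWunit
    -- W.mulVec c = ∑ c j • w j
    have hWmul : ∀ c : Fin n → ℂ, W.mulVec c = ∑ j, c j • w j := by
      intro c
      ext k
      show ∑ j, W k j * c j = (∑ j, c j • w j) k
      rw [Finset.sum_apply]
      apply Finset.sum_congr rfl
      intro j _
      simp [hW, mul_comm]
    -- the linear map
    set Φ : matCentC n T →ₗ[ℂ] (Fin n → ℂ) :=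
      { toFun := fun B => (B : Matrix (Fin n) (Fin n) ℂ).mulVec v0
        map_add' := by intro B C; simp [Matrix.add_mulVec]
        map_smul' := by intro c B; simp [Matrix.smul_mulVec] } with hΦ
    have hinj : Function.Injective Φ := by
      rw [← LinearMap.ker_eq_bot, LinearMap.ker_eq_bot']
      intro B hB
      obtain ⟨B, hBmem⟩ := B
      have hB0 : B.mulVec v0 = 0 := congrArg (fun f => f) hB
      -- B * W = 0
      have hBW : B * W = 0 := by
        ext k j
        show ∑ l, B k l * W l j = 0
        have hTB : Commute T B := hBmem
        have hcomm : T ^ (j:ℕ) * B = B * T ^ (j:ℕ) := (hTB.pow_left (j:ℕ))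
        have hBw : B.mulVec (w j) = 0 := by
          rw [hw]
          show B.mulVec ((T ^ (j:ℕ)).mulVec v0) = 0
          rw [Matrix.mulVec_mulVec, ← hcomm, ← Matrix.mulVec_mulVec, hB0,
            Matrix.mulVec_zero]
        calc ∑ l, B k l * W l j = B.mulVec (w j) k := by
              simp [Matrix.mulVec, dotProduct, hW]
          _ = 0 := by rw [hBw]; rfl
      have : B = 0 := by
        have := congrArg (fun M => M * W⁻¹) hBW
        simpa [Matrix.mul_assoc, hWW] using this
      exact Subtype.ext this
    have hsurj : Function.Surjective Φ := by
      intro u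
      set c : Fin n → ℂ := W⁻¹.mulVec u with hc
      set B : Matrix (Fin n) (Fin n) ℂ := ∑ j : Fin n, c j • T ^ (j : ℕ) with hB
      have hBmem : B ∈ matCentC n T := by
        rw [mem_matCentC, hB, Finset.mul_sum, Finset.sum_mul]
        apply Finset.sum_congr rfl
        intro j _
        rw [mul_smul_comm, smul_mul_assoc, ← pow_succ, ← pow_succ']
      refine ⟨⟨B, hBmem⟩, ?_⟩
      show B.mulVec v0 = u
      have h1' : B.mulVec v0 = ∑ j : Fin n, c j • w j := by
        ext k
        rw [hB]
        show ((∑ j : Fin n, c j • T ^ (j:ℕ)).mulVec v0) k = _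
        simp only [Matrix.mulVec, dotProduct, Finset.sum_apply,
          Matrix.sum_apply, Matrix.smul_apply, smul_eq_mul, Finset.sum_mul]
        rw [Finset.sum_comm]
        apply Finset.sum_congr rfl
        intro j _
        simp only [hw, Pi.smul_apply, smul_eq_mul, Matrix.mulVec,
          dotProduct, Finset.mul_sum]
        apply Finset.sum_congr rfl
        intro l _
        ring
      rw [h1', ← hWmul, hc, Matrix.mulVec_mulVec, hWW, Matrix.one_mulVec]
    have equiv := LinearEquiv.ofBijective Φ ⟨hinj, hsurj⟩
    rw [equiv.finrank_eq]
    simp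

lemma cent_reindex (n : ℕ) (A : Matrix (Fin n) (Fin n) ℂ) (e : Fin n ≃ Fin n) :
    finrank ℂ (matCentC n (A.submatrix e e)) = finrank ℂ (matCentC n A) := by
  set R := Matrix.reindexLinearEquiv (R := ℂ) (A := ℂ) e.symm e.symm with hR
  have hRapp : ∀ B : Matrix (Fin n) (Fin n) ℂ, R B = B.submatrix e e := by
    intro B
    rw [hR, Matrix.reindexLinearEquiv_apply, Matrix.reindex_apply]
    simp
  have hmap : Submodule.map (R : Matrix (Fin n) (Fin n) ℂ →ₗ[ℂ] Matrix (Fin n) (Fin n) ℂ)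
      (matCentC n A) = matCentC n (A.submatrix e e) := by
    apply Submodule.ext
    intro B
    rw [Submodule.mem_map]
    constructor
    · rintro ⟨C, hC, rfl⟩
      rw [mem_matCentC] at hC ⊢
      show A.submatrix e e * R C = R C * A.submatrix e e
      rw [hRapp, Matrix.submatrix_mul_equiv, Matrix.submatrix_mul_equiv, hC]
    · intro hB
      rw [mem_matCentC] at hB
      refine ⟨B.submatrix e.symm e.symm, ?_, ?_⟩
      · rw [mem_matCentC]
        have hAA : (A.submatrix e e).submatrix e.symm e.symm = A := by
          simp [Matrix.submatrix_submatrix]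
        calc A * B.submatrix e.symm e.symm
            = (A.submatrix e e).submatrix e.symm e.symm * B.submatrix e.symm e.symm := by
              rw [hAA]
          _ = (A.submatrix e e * B).submatrix e.symm e.symm :=
              Matrix.submatrix_mul_equiv _ _ _ _ _
          _ = (B * A.submatrix e e).submatrix e.symm e.symm := by rw [hB]
          _ = B.submatrix e.symm e.symm * (A.submatrix e e).submatrix e.symm e.symm :=
              (Matrix.submatrix_mul_equiv _ _ _ _ _).symm
          _ = B.submatrix e.symm e.symm * A := by rw [hAA]
      · rw [LinearEquiv.coe_coe, hRapp]
        simp [Matrix.submatrix_submatrix, Equiv.symm_comp_self]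
  rw [← hmap]
  exact LinearEquiv.finrank_map_eq _ _

theorem stmt12 (n p : ℕ) (blk : Fin n → Fin p) (lam : Fin p → ℝ)
    -- the eigenvalues λ_1, …, λ_p are pairwise distinct
    (hlam : Function.Injective lam)
    -- every block is nonempty (n_j ≥ 1)
    (hblk : ∀ j : Fin p, 0 < (Finset.univ.filter (fun i => blk i = j)).card)
    -- 2 n_j ≤ n for every j
    (hhalf : ∀ j : Fin p, 2 * (Finset.univ.filter (fun i => blk i = j)).card ≤ n)
    -- a = diag(iλ_1 I_{n_1}, …, iλ_p I_{n_p})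
    (a : Matrix (Fin n) (Fin n) ℂ)
    (ha : a = Matrix.diagonal (fun i => Complex.I * (lam (blk i) : ℂ))) :
    ∃ x : Matrix (Fin n) (Fin n) ℂ,
      -- x is real, skew-symmetric, with vanishing diagonal blocks (i.e. x ∈ m̃)
      (∀ i j, (x i j).im = 0) ∧ xᵀ = -x ∧ (∀ i j, blk i = blk j → x i j = 0) ∧
      -- and for every λ ∈ ℂ the centralizer of x + λa has dimension exactly n
      ∀ lam' : ℂ, finrank ℂ (matCentC n (x + lam' • a)) = n := by
  rcases Nat.eq_zero_or_pos n with hn | hn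
  · subst hn
    refine ⟨0, by simp, by simp, fun i => i.elim0, ?_⟩
    intro lam'
    exact cent_rank 0 _ (fun k => k.elim0) (fun k => k.elim0)
  · obtain ⟨e, he⟩ := exists_good_order n p blk hn hhalf
    set x : Matrix (Fin n) (Fin n) ℂ := fun i j =>
      if ((e.symm j : ℕ) = (e.symm i : ℕ) + 1) then 1
      else if ((e.symm i : ℕ) = (e.symm j : ℕ) + 1) then -1 else 0 with hx
    have hxent : ∀ i j, x i j =
        if ((e.symm j : ℕ) = (e.symm i : ℕ) + 1) then 1
        else if ((e.symm i : ℕ) = (e.symm j : ℕ) + 1) then -1 else 0 := fun i j => rfl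
    refine ⟨x, ?_, ?_, ?_, ?_⟩
    · intro i j
      rw [hxent]
      split_ifs <;> simp
    · ext i j
      show x j i = -(x i j)
      rw [hxent, hxent]
      split_ifs with h1 h2 h3 h4 h5 h6 <;> first | (exfalso; omega) | norm_num
    · intro i j hij
      rw [hxent]
      split_ifs with h1 h2
      · exfalso
        have hlt : ((e.symm i : ℕ)) + 1 < n := by rw [← h1]; exact (e.symm j).isLt
        have := he (e.symm i : ℕ) (e.symm i).isLt hlt
        rw [show (⟨(e.symm i : ℕ), (e.symm i).isLt⟩ : Fin n) = e.symm i from Fin.eta _ _,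
          show (⟨(e.symm i : ℕ) + 1, hlt⟩ : Fin n) = e.symm j from (Fin.ext h1.symm),
          Equiv.apply_symm_apply, Equiv.apply_symm_apply] at this
        exact this hij
      · exfalso
        have hlt : ((e.symm j : ℕ)) + 1 < n := by rw [← h2]; exact (e.symm i).isLt
        have := he (e.symm j : ℕ) (e.symm j).isLt hlt
        rw [show (⟨(e.symm j : ℕ), (e.symm j).isLt⟩ : Fin n) = e.symm j from Fin.eta _ _,
          show (⟨(e.symm j : ℕ) + 1, hlt⟩ : Fin n) = e.symm i from (Fin.ext h2.symm),
          Equiv.apply_symm_apply, Equiv.apply_symm_apply] at this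
        exact this hij.symm
      · rfl
    · intro lam'
      rw [← cent_reindex n (x + lam' • a) e]
      have hent : ∀ k l : Fin n, (x + lam' • a).submatrix e e k l =
          (if ((l : ℕ) = (k : ℕ) + 1) then 1
            else if ((k : ℕ) = (l : ℕ) + 1) then (-1 : ℂ) else 0)
          + lam' * (if k = l then Complex.I * (lam (blk (e k)) : ℂ) else 0) := by
        intro k l
        rw [Matrix.submatrix_apply, Matrix.add_apply, Matrix.smul_apply, hxent, ha]
        simp only [Equiv.symm_apply_apply, smul_eq_mul]
        congr 1
        rw [Matrix.diagonal_apply]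
        by_cases hkl : k = l
        · subst hkl; simp
        · rw [if_neg (fun h => hkl (e.injective h)), if_neg hkl]
      apply cent_rank
      · intro k l hkl
        rw [hent]
        rw [if_neg (by omega), if_neg (by omega), if_neg (by
          intro h; subst h; omega)]
        ring
      · intro k l hkl
        rw [hent]
        rw [if_neg (by omega), if_pos hkl, if_neg (by
          intro h; rw [h] at hkl; omega)]
        intro h
        rw [mul_zero, add_zero] at h
        exact absurd h (by norm_num)
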